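/- Let n ≥ 1, G = ℍⁿ = {x ∈ ℝⁿ : xₙ > 0}, x ∈ G, and r ∈ (0,1). Then the metric ball B_s(x,r) in the triangular ratio metric is exactly the open Euclidean ball with center c and radius R, where c agrees with x in the first n−1 coordinates and has n-th coordinate xₙ(1+r²)/(1−r²), and R = 2xₙr/(1−r²). In particular B_s(x,r) is strictly convex. -/

import Mathlib

/-- The triangular ratio metric `s_G(x,y) = sup_{z ∈ ∂G} |x−y|/(|z−x|+|z−y|)`. -/
noncomputable def sMetric {n : ℕ} (G : Set (EuclideanSpace ℝ (Fin n)))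
    (x y : EuclideanSpace ℝ (Fin n)) : ℝ :=
  ⨆ z ∈ frontier G, dist x y / (dist z x + dist z y)

/-- The metric ball `B_s(x,r) = {y ∈ G : s_G(x,y) < r}`. -/
def sBall {n : ℕ} (G : Set (EuclideanSpace ℝ (Fin n))) (x : EuclideanSpace ℝ (Fin n))
    (r : ℝ) : Set (EuclideanSpace ℝ (Fin n)) :=
  {y ∈ G | sMetric G x y < r}


lemma aux_scalar1 (a b A r : ℝ) (ha : 0 < a) (hr0 : 0 < r) (hr1 : r < 1) (hA : 0 ≤ A) :
    ((a-b)^2 + A < r^2*((a+b)^2+A) ↔ (b - a*(1+r^2)/(1-r^2))^2 + A < (2*a*r/(1-r^2))^2) := by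
  have hd : 0 < 1 - r^2 := by nlinarith
  have hd2 : 0 < (1 - r^2)^2 := by positivity
  rw [show (b - a*(1+r^2)/(1-r^2))^2 + A
        = ((b*(1-r^2) - a*(1+r^2))^2 + A*(1-r^2)^2)/(1-r^2)^2 by field_simp,
      show (2*a*r/(1-r^2))^2 = (2*a*r)^2/(1-r^2)^2 by rw [div_pow],
      div_lt_div_iff_of_pos_right hd2]
  constructor <;> intro h <;> nlinarith [mul_lt_mul_of_pos_left h hd]

lemma aux_scalar2 (a b A r : ℝ) (ha : 0 < a) (hr0 : 0 < r) (hr1 : r < 1) (hA : 0 ≤ A)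
    (h : (b - a*(1+r^2)/(1-r^2))^2 + A < (2*a*r/(1-r^2))^2) : 0 < b := by
  have hd : 0 < 1 - r^2 := by nlinarith
  have hd2 : 0 < (1 - r^2)^2 := by positivity
  rw [show (b - a*(1+r^2)/(1-r^2))^2 + A
        = ((b*(1-r^2) - a*(1+r^2))^2 + A*(1-r^2)^2)/(1-r^2)^2 by field_simp,
      show (2*a*r/(1-r^2))^2 = (2*a*r)^2/(1-r^2)^2 by rw [div_pow],
      div_lt_div_iff_of_pos_right hd2] at h
  by_contra hb
  push_neg at hb
  have hub : b*(1-r^2) ≤ 0 := mul_nonpos_of_nonpos_of_nonneg hb hd.le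
  nlinarith [mul_nonneg (neg_nonneg.2 hub) (by positivity : (0:ℝ) ≤ a*(1+r^2)),
    mul_nonneg hA hd2.le, sq_nonneg (a*(1-r^2))]

lemma aux_sq_lt_sq {a b : ℝ} (ha : 0 ≤ a) (hb : 0 < b) : a^2 < b^2 ↔ a < b := by
  constructor <;> intro h <;> nlinarith

lemma aux_frontier_half {n : ℕ} (i : Fin n) :
    frontier {w : EuclideanSpace ℝ (Fin n) | 0 < w i}
    = {w : EuclideanSpace ℝ (Fin n) | w i = 0} := by
  have hsurj : Function.Surjective (EuclideanSpace.proj (𝕜 := ℝ) (ι := Fin n) i) :=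
    fun a => ⟨EuclideanSpace.single i a, by simp [PiLp.proj_apply, EuclideanSpace.single_apply]⟩
  have h : {w : EuclideanSpace ℝ (Fin n) | 0 < w i}
      = (EuclideanSpace.proj (𝕜 := ℝ) (ι := Fin n) i) ⁻¹' Set.Ioi 0 := rfl
  rw [h, ContinuousLinearMap.frontier_preimage _ hsurj, frontier_Ioi]
  rfl

lemma aux_dist_eq {n : ℕ} (u v : EuclideanSpace ℝ (Fin n)) :
    dist u v = Real.sqrt (∑ j, (u j - v j)^2) := by
  rw [EuclideanSpace.dist_eq]
  congr 1
  exact Finset.sum_congr rfl fun j _ => by rw [Real.dist_eq, sq_abs]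

lemma aux_dist_sq {n : ℕ} (u v : EuclideanSpace ℝ (Fin n)) :
    (dist u v)^2 = ∑ j, (u j - v j)^2 := by
  rw [aux_dist_eq]; exact Real.sq_sqrt (by positivity)

/-- Let n ≥ 1, G = ℍⁿ, x ∈ G, and r ∈ (0,1). Then B_s(x,r) is exactly the open
Euclidean ball with center c and radius R, where c agrees with x in the first n−1
coordinates and has n-th coordinate xₙ(1+r²)/(1−r²), and R = 2xₙr/(1−r²).
In particular B_s(x,r) is strictly convex. -/
theorem sBall_halfSpace_eq_ball (n : ℕ) (hn : 1 ≤ n) (i : Fin n) (hi : (i : ℕ) = n - 1)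
    (x : EuclideanSpace ℝ (Fin n)) (hx : 0 < x i) (r : ℝ) (hr : r ∈ Set.Ioo (0:ℝ) 1)
    (c : EuclideanSpace ℝ (Fin n)) (hc₁ : ∀ j, j ≠ i → c j = x j)
    (hc₂ : c i = x i * (1 + r^2) / (1 - r^2)) :
    sBall {w : EuclideanSpace ℝ (Fin n) | 0 < w i} x r =
      Metric.ball c (2 * x i * r / (1 - r^2)) ∧
    StrictConvex ℝ (sBall {w : EuclideanSpace ℝ (Fin n) | 0 < w i} x r) := by
  obtain ⟨hr0, hr1⟩ := hr
  have hd : 0 < 1 - r^2 := by nlinarith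
  have hRpos : 0 < 2 * x i * r / (1 - r^2) := by positivity
  -- main equivalence for y in the half space
  have key : ∀ y : EuclideanSpace ℝ (Fin n), 0 < y i →
      (sMetric {w : EuclideanSpace ℝ (Fin n) | 0 < w i} x y < r ↔
        dist y c < 2 * x i * r / (1 - r^2)) := by
    intro y hy
    set y' : EuclideanSpace ℝ (Fin n) := WithLp.toLp 2 (Function.update (WithLp.ofLp y) i (-(y i))) with hy'def
    have hy'i : y' i = -(y i) := Function.update_self i _ (WithLp.ofLp y)
    have hy'j : ∀ j, j ≠ i → y' j = y j := fun j hj => Function.update_of_ne hj _ (WithLp.ofLp y)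
    have hpos' : 0 < dist x y' := by
      have h1 : (x i - y' i)^2 ≤ ∑ j, (x j - y' j)^2 :=
        Finset.single_le_sum (f := fun j => (x j - y' j)^2)
          (fun j _ => sq_nonneg _) (Finset.mem_univ i)
      have h2 : 0 < x i - y' i := by rw [hy'i]; linarith
      have h3 := Real.sqrt_le_sqrt h1
      rw [Real.sqrt_sq h2.le] at h3
      rw [aux_dist_eq]
      linarith
    have hrefl : ∀ z : EuclideanSpace ℝ (Fin n), z i = 0 → dist z y = dist z y' := by
      intro z hz
      rw [aux_dist_eq, aux_dist_eq]
      congr 1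
      refine Finset.sum_congr rfl fun j _ => ?_
      by_cases hj : j = i
      · subst hj; rw [hz, hy'i]; ring
      · rw [hy'j j hj]
    have hbound : ∀ z : EuclideanSpace ℝ (Fin n), z i = 0 →
        dist x y / (dist z x + dist z y) ≤ dist x y / dist x y' := by
      intro z hz
      have h2 : dist x y' ≤ dist z x + dist z y := by
        rw [hrefl z hz, dist_comm z x]; exact dist_triangle x z y'
      gcongr
    have hnn : 0 ≤ dist x y / dist x y' := div_nonneg dist_nonneg hpos'.le
    have hab : 0 < x i + y i := by linarith
    set t : ℝ := x i / (x i + y i) with ht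
    have ht0 : 0 ≤ t := by positivity
    have ht1 : t ≤ 1 := by rw [ht, div_le_one hab]; linarith
    set z₀ : EuclideanSpace ℝ (Fin n) := x + t • (y' - x) with hz₀
    have hz₀i : z₀ i = 0 := by
      have h0 : z₀ i = x i + t * (y' i - x i) := rfl
      rw [h0, hy'i, ht]
      field_simp
      ring
    have hdzx : dist z₀ x = t * dist x y' := by
      have h1 : z₀ - x = t • (y' - x) := by rw [hz₀]; abel
      rw [dist_eq_norm, h1, norm_smul, Real.norm_eq_abs, abs_of_nonneg ht0,
        ← dist_eq_norm, dist_comm y' x]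
    have hdzy : dist z₀ y' = (1 - t) * dist x y' := by
      have h1 : z₀ - y' = (1 - t) • (x - y') := by rw [hz₀]; module
      rw [dist_eq_norm, h1, norm_smul, Real.norm_eq_abs, abs_of_nonneg (by linarith),
        ← dist_eq_norm]
    have hsum : dist z₀ x + dist z₀ y = dist x y' := by
      rw [hrefl z₀ hz₀i, hdzx, hdzy]; ring
    have hsmeq : sMetric {w : EuclideanSpace ℝ (Fin n) | 0 < w i} x y
        = dist x y / dist x y' := by
      unfold sMetric
      rw [aux_frontier_half i]
      apply le_antisymm
      · exact Real.iSup_le (fun z => Real.iSup_le (fun hz => hbound z hz) hnn) hnn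
      · have hmem : z₀ ∈ {w : EuclideanSpace ℝ (Fin n) | w i = 0} := hz₀i
        have hbdd : BddAbove (Set.range fun z : EuclideanSpace ℝ (Fin n) =>
            ⨆ (_ : z ∈ {w : EuclideanSpace ℝ (Fin n) | w i = 0}),
              dist x y / (dist z x + dist z y)) := by
          refine ⟨dist x y / dist x y', ?_⟩
          rintro _ ⟨z, rfl⟩
          exact Real.iSup_le (fun hz => hbound z hz) hnn
        refine le_trans ?_ (le_ciSup hbdd z₀)
        rw [ciSup_pos hmem, hsum]
    -- coordinate expansion
    have hxy's : (dist x y')^2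
        = (x i + y i)^2 + ∑ j ∈ Finset.univ.erase i, (x j - y j)^2 := by
      rw [aux_dist_sq, ← Finset.add_sum_erase _ _ (Finset.mem_univ i)]
      congr 1
      · rw [hy'i]; ring
      · exact Finset.sum_congr rfl fun j hj => by rw [hy'j j (Finset.ne_of_mem_erase hj)]
    have hxys : (dist x y)^2
        = (x i - y i)^2 + ∑ j ∈ Finset.univ.erase i, (x j - y j)^2 := by
      rw [aux_dist_sq, ← Finset.add_sum_erase _ _ (Finset.mem_univ i)]
    have hycs : (dist y c)^2
        = (y i - c i)^2 + ∑ j ∈ Finset.univ.erase i, (x j - y j)^2 := by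
      rw [aux_dist_sq, ← Finset.add_sum_erase _ _ (Finset.mem_univ i)]
      congr 1
      exact Finset.sum_congr rfl fun j hj => by
        rw [hc₁ j (Finset.ne_of_mem_erase hj)]; ring
    have hA0 : 0 ≤ ∑ j ∈ Finset.univ.erase i, (x j - y j)^2 :=
      Finset.sum_nonneg fun j _ => sq_nonneg _
    rw [hsmeq, div_lt_iff₀ hpos',
      ← aux_sq_lt_sq dist_nonneg (mul_pos hr0 hpos'),
      ← aux_sq_lt_sq dist_nonneg hRpos,
      mul_pow, hxys, hxy's, hycs, hc₂]
    exact aux_scalar1 (x i) (y i) _ r hx hr0 hr1 hA0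
  -- points of the euclidean ball lie in the half space
  have memball : ∀ y : EuclideanSpace ℝ (Fin n),
      dist y c < 2 * x i * r / (1 - r^2) → 0 < y i := by
    intro y h
    have h2 : (dist y c)^2 < (2 * x i * r / (1 - r^2))^2 :=
      (aux_sq_lt_sq dist_nonneg hRpos).2 h
    rw [aux_dist_sq, ← Finset.add_sum_erase _ _ (Finset.mem_univ i)] at h2
    have hA0 : 0 ≤ ∑ j ∈ Finset.univ.erase i, (y j - c j)^2 :=
      Finset.sum_nonneg fun j _ => sq_nonneg _
    refine aux_scalar2 (x i) (y i) _ r hx hr0 hr1 hA0 ?_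
    rw [← hc₂]
    exact h2
  have hset : sBall {w : EuclideanSpace ℝ (Fin n) | 0 < w i} x r
      = Metric.ball c (2 * x i * r / (1 - r^2)) := by
    ext y
    simp only [sBall, Set.mem_setOf_eq, Metric.mem_ball]
    constructor
    · rintro ⟨hy, hs⟩; exact (key y hy).1 hs
    · intro h; exact ⟨memball y h, (key y (memball y h)).2 h⟩
  exact ⟨hset, hset ▸ ((convex_ball c _).strictConvex_of_isOpen Metric.isOpen_ball)⟩
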